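/- Let $n, k$ be positive integers with $\gcd(k,n)=1$ and let $F$ be a finite field with $2^n$ elements. Then the function $f(x) = x^{2^k+1}$ is almost perfect nonlinear on $F$: for every nonzero $a \in F$ and every $b \in F$, the equation $(x+a)^{2^k+1} + x^{2^k+1} = b$ has at most two solutions $x \in F$. -/

import Mathlib

theorem stmt_9 (n k : ℕ) (hn : 0 < n) (hk : 0 < k) (hgcd : Nat.gcd k n = 1)
    (F : Type*) [Field F] [Fintype F] (hF : Fintype.card F = 2 ^ n) :
    ∀ a b : F, a ≠ 0 →
      {x : F | (x + a) ^ (2 ^ k + 1) + x ^ (2 ^ k + 1) = b}.ncard ≤ 2 := by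
  intro a b ha
  -- characteristic 2
  have hchar : CharP F 2 := by
    have hcp : CharP F (ringChar F) := ringChar.charP F
    have hprime : (ringChar F).Prime := CharP.char_is_prime F _
    obtain ⟨m, hm⟩ := FiniteField.card F (ringChar F)
    have hdvd : ringChar F ∣ 2 ^ n := by
      rw [← hF, hm.2]
      exact dvd_pow_self _ (by positivity)
    have h2 : ringChar F = 2 :=
      (Nat.prime_dvd_prime_iff_eq hprime Nat.prime_two).1 (hprime.dvd_of_dvd_pow hdvd)
    rw [← h2]; exact hcp
  haveI := hchar
  haveI : Fact (Nat.Prime 2) := ⟨Nat.prime_two⟩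
  -- handle n = 1
  rcases eq_or_lt_of_le (show 1 ≤ n from hn) with hn1 | hn1
  · have : Fintype.card F = 2 := by rw [hF, ← hn1]; norm_num
    calc {x : F | (x + a) ^ (2 ^ k + 1) + x ^ (2 ^ k + 1) = b}.ncard
        ≤ (Set.univ : Set F).ncard := Set.ncard_le_ncard (Set.subset_univ _) Set.finite_univ
      _ = 2 := by rw [Set.ncard_univ, Nat.card_eq_fintype_card, this]
  -- main case
  set q := 2 ^ k with hq
  set S := {x : F | (x + a) ^ (q + 1) + x ^ (q + 1) = b} with hS
  have expand : ∀ x : F, (x + a) ^ (q + 1) + x ^ (q + 1)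
      = x ^ q * a + a ^ q * x + a ^ (q + 1) := by
    intro x
    have hfr : (x + a) ^ q = x ^ q + a ^ q := add_pow_char_pow x a 2 k
    calc (x + a) ^ (q + 1) + x ^ (q + 1)
        = (x ^ q + a ^ q) * (x + a) + x ^ q * x := by
          rw [pow_succ, hfr, pow_succ]
      _ = x ^ q * x + x ^ q * x + (x ^ q * a + a ^ q * x + a ^ q * a) := by ring
      _ = x ^ q * a + a ^ q * x + a ^ (q + 1) := by
          rw [CharTwo.add_self_eq_zero, zero_add, pow_succ]
  -- key: any two solutions differ by 0 or a
  have key : ∀ x ∈ S, ∀ y ∈ S, x = y ∨ x = y + a := by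
    intro x hx y hy
    have hx' : x ^ q * a + a ^ q * x + a ^ (q + 1) = b := by rw [← expand]; exact hx
    have hy' : y ^ q * a + a ^ q * y + a ^ (q + 1) = b := by rw [← expand]; exact hy
    set d := x + y with hd
    have hdq : d ^ q * a + a ^ q * d = 0 := by
      have hxy : d ^ q = x ^ q + y ^ q := add_pow_char_pow x y 2 k
      have hx'' : x ^ q * a + a ^ q * x = b + a ^ (q + 1) := by
        rw [CharTwo.eq_add_iff_add_eq]; linear_combination hx'
      have hy'' : y ^ q * a + a ^ q * y = b + a ^ (q + 1) := by
        rw [CharTwo.eq_add_iff_add_eq]; linear_combination hy'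
      calc d ^ q * a + a ^ q * d
          = (x ^ q * a + a ^ q * x) + (y ^ q * a + a ^ q * y) := by rw [hxy]; ring
        _ = (b + a ^ (q + 1)) + (b + a ^ (q + 1)) := by rw [hx'', hy'']
        _ = 0 := CharTwo.add_self_eq_zero _
    by_cases hd0 : d = 0
    · left
      have : x + y = 0 := hd0
      calc x = x + (y + y) := by rw [CharTwo.add_self_eq_zero, add_zero]
        _ = (x + y) + y := by ring
        _ = y := by rw [this, zero_add]
    · right
      -- d ≠ 0 case: show d = a
      have hda : d ^ q * a = a ^ q * d := by
        have := CharTwo.add_eq_iff_eq_add.mp hdq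
        rwa [zero_add] at this
      set u := d * a⁻¹ with hu
      have hu0 : u ≠ 0 := mul_ne_zero hd0 (inv_ne_zero ha)
      have huq : u ^ q = u := by
        rw [hu, mul_pow, inv_pow]
        field_simp
        linear_combination hda
      -- iterate: u ^ (2 ^ (k * s)) = u for all s
      have hks : ∀ s : ℕ, u ^ 2 ^ (k * s) = u := by
        intro s
        induction s with
        | zero => simp
        | succ s ih =>
          rw [Nat.mul_succ, pow_add, pow_mul, ih]
          exact huq
      have hcard : ∀ t : ℕ, u ^ 2 ^ (n * t) = u := by
        intro t
        induction t with
        | zero => simp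
        | succ t ih =>
          rw [Nat.mul_succ, pow_add, pow_mul, ih, ← hF]
          exact FiniteField.pow_card u
      -- Bezout: k * s % n = 1
      obtain ⟨s, -, hs⟩ := Nat.exists_mul_mod_eq_one_of_coprime hgcd hn1
      have hks' : k * s = n * (k * s / n) + 1 := by
        conv_lhs => rw [← Nat.div_add_mod (k * s) n, hs]
      have hu2 : u ^ 2 = u := by
        have h1 := hks s
        rw [hks', pow_add, pow_mul, hcard (k * s / n)] at h1
        norm_num at h1
        exact h1
      have hu1 : u = 1 := by
        have : u * (u - 1) = 0 := by ring_nf; linear_combination hu2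
        rcases mul_eq_zero.mp this with h | h
        · exact absurd h hu0
        · exact sub_eq_zero.mp h
      have hdaeq : d = a := by
        have h2 := hu1
        rw [hu, mul_inv_eq_one₀ ha] at h2
        exact h2
      calc x = x + (y + y) := by rw [CharTwo.add_self_eq_zero, add_zero]
        _ = y + (x + y) := by ring
        _ = y + a := by rw [← hd, hdaeq]
  -- conclude
  rcases Set.eq_empty_or_nonempty S with hSe | ⟨y, hy⟩
  · simp [hSe]
  · have hsub : S ⊆ {y, y + a} := by
      intro x hx
      rcases key x hx y hy with h | h <;> simp [h]
    calc S.ncard ≤ ({y, y + a} : Set F).ncard :=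
          Set.ncard_le_ncard hsub ((Set.finite_singleton _).insert _)
      _ ≤ ({y + a} : Set F).ncard + 1 := Set.ncard_insert_le _ _
      _ ≤ 2 := by rw [Set.ncard_singleton]
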